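/- Let p be an odd positive integer and let G be a graph of order p+2 not containing B_p with exactly (p+1)^2/2 edges. Then G is isomorphic to the join K_1 ∨ (K_{p+1} − PM). -/

import Mathlib

open SimpleGraph

/-- A graph contains the book `B_p` iff some edge has at least `p` common neighbors. -/
def SimpleGraph.ContainsBook {V : Type*} (G : SimpleGraph V) (p : ℕ) : Prop :=
  ∃ x y, G.Adj x y ∧ p ≤ (G.commonNeighbors x y).ncard

/-- The Turán number `ex(n, B_p)`: the maximum number of edges of a simple graph
on `n` vertices containing no book `B_p`. -/
noncomputable def bookTuranNumber (n p : ℕ) : ℕ :=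
  sSup {e : ℕ | ∃ G : SimpleGraph (Fin n), ¬ G.ContainsBook p ∧ G.edgeSet.ncard = e}

/-- The disjoint union of `m` copies of the complete graph `K_k`. -/
def unionComplete (m k : ℕ) : SimpleGraph (Fin m × Fin k) :=
  SimpleGraph.fromRel fun a b => a.1 = b.1

/-- The join `G ∨ H` of two graphs. -/
def SimpleGraph.join {α β : Type*} (G : SimpleGraph α) (H : SimpleGraph β) :
    SimpleGraph (α ⊕ β) := (Gᶜ ⊕g Hᶜ)ᶜ

/-- A disjoint union of cycles `C_{i 0} + ⋯ + C_{i (t-1)}`. -/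
def cycleFamily (t : ℕ) (i : Fin t → ℕ) : SimpleGraph (Σ j : Fin t, Fin (i j)) :=
  SimpleGraph.fromRel fun a b => ∃ h : a.1 = b.1, (SimpleGraph.cycleGraph (i b.1)).Adj (h ▸ a.2) b.2

lemma pairing {S : Type*} [Fintype S] [DecidableEq S] {m : ℕ} (hcard : Fintype.card S = 2 * m)
    (f : S → S) (hff : ∀ x, f (f x) = x) (hfx : ∀ x, f x ≠ x) :
    ∃ e : S ≃ Fin m × Fin 2, ∀ x y, ((e x).1 = (e y).1 ↔ (y = x ∨ y = f x)) := by
  classical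
  let st : Setoid S := ⟨fun x y => y = x ∨ y = f x, by
    constructor
    · exact fun x => Or.inl rfl
    · rintro x y (rfl | rfl)
      · exact Or.inl rfl
      · exact Or.inr (hff x).symm
    · rintro x y z (rfl | rfl) h
      · exact h
      · rcases h with rfl | rfl
        · exact Or.inr rfl
        · exact Or.inl (hff x)⟩
  let Q := Quotient st
  have hrel : ∀ a b : S, Quotient.mk st a = Quotient.mk st b ↔ (b = a ∨ b = f a) := by
    intro a b
    exact ⟨fun h => Quotient.exact h, fun h => Quotient.sound h⟩
  have key : ∀ x : S, x ≠ (Quotient.mk st x).out → x = f (Quotient.mk st x).out := by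
    intro x hx
    have h : Quotient.mk st ((Quotient.mk st x).out) = Quotient.mk st x := Quotient.out_eq _
    rcases (hrel _ _).mp h with h' | h'
    · exact absurd h' hx
    · exact h'
  have hmkf : ∀ q : Q, Quotient.mk st (f q.out) = q := by
    intro q
    have : Quotient.mk st (f q.out) = Quotient.mk st q.out :=
      (hrel _ _).mpr (Or.inr (hff _).symm)
    rw [this, Quotient.out_eq]
  let e0 : S ≃ Q × Fin 2 :=
    { toFun := fun x => (Quotient.mk st x, if x = (Quotient.mk st x).out then 0 else 1)
      invFun := fun q => if q.2 = 0 then q.1.out else f q.1.out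
      left_inv := by
        intro x
        by_cases hx : x = (Quotient.mk st x).out
        · simp only [if_pos hx]
          norm_num
          exact hx.symm
        · simp only [if_neg hx]
          norm_num
          exact (key x hx).symm
      right_inv := by
        rintro ⟨q, i⟩
        dsimp only
        have h1 : Quotient.mk st q.out = q := Quotient.out_eq q
        have h3 : q.out = (Quotient.mk st q.out).out := by rw [h1]
        have h2 : f q.out ≠ (Quotient.mk st (f q.out)).out := by
          rw [hmkf q]
          exact hfx q.out
        by_cases hi : i = 0
        · rw [if_pos hi, if_pos h3, h1, hi]
        · have hi1 : i = 1 := by omega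
          rw [if_neg hi, if_neg h2, hmkf, hi1] }
  have hQcard : Fintype.card Q = m := by
    have := Fintype.card_congr e0
    simp only [Fintype.card_prod, Fintype.card_fin] at this
    omega
  let eQ : Q ≃ Fin m := Fintype.equivFinOfCardEq hQcard
  refine ⟨e0.trans (eQ.prodCongr (Equiv.refl _)), fun x y => ?_⟩
  have hfst : ∀ z : S, ((e0.trans (eQ.prodCongr (Equiv.refl (Fin 2)))) z).1
      = eQ (Quotient.mk st z) := fun z => rfl
  rw [hfst, hfst, eQ.apply_eq_iff_eq, hrel]

theorem stmt8 (p : ℕ) (hp : 1 ≤ p) (hodd : Odd p) {V : Type*} [Fintype V]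
    (hV : Fintype.card V = p + 2) (G : SimpleGraph V) (hfree : ¬ G.ContainsBook p)
    (hsize : G.edgeSet.ncard = (p + 1) ^ 2 / 2) :
    Nonempty (G ≃g SimpleGraph.join (completeGraph (Fin 1))
      (unionComplete ((p + 1) / 2) 2)ᶜ) := by
  classical
  set m := (p + 1) / 2 with hm
  have hpm : p + 1 = 2 * m := by
    obtain ⟨k, hk⟩ := hodd; omega
  -- degree sum
  have hsum : ∑ v, G.degree v = (p + 1) ^ 2 := by
    rw [G.sum_degrees_eq_twice_card_edges]
    have h1 : G.edgeSet.ncard = G.edgeFinset.card := by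
      rw [← Set.ncard_coe_finset, SimpleGraph.coe_edgeFinset]
    have h2 : 2 ∣ (p + 1) ^ 2 := Dvd.dvd.pow (by omega) (by omega)
    omega
  have hdeg_le : ∀ v, G.degree v ≤ p + 1 := fun v => by
    have := G.degree_lt_card_verts v; omega
  -- book-freeness: common neighbors ≤ p - 1
  have hbook : ∀ x y, G.Adj x y → (G.neighborFinset x ∩ G.neighborFinset y).card + 1 ≤ p := by
    intro x y hxy
    have h1 : (G.commonNeighbors x y).ncard = (G.neighborFinset x ∩ G.neighborFinset y).card := by
      rw [show G.commonNeighbors x y = ↑(G.neighborFinset x ∩ G.neighborFinset y) by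
        rw [Finset.coe_inter, SimpleGraph.neighborFinset_def, SimpleGraph.neighborFinset_def]
        simp [SimpleGraph.commonNeighbors], Set.ncard_coe_finset]
    have h2 : ¬ (p ≤ (G.commonNeighbors x y).ncard) := fun h => hfree ⟨x, y, hxy, h⟩
    omega
  -- key edge degree bound
  have hedge : ∀ x y, G.Adj x y → G.degree x + G.degree y ≤ 2 * p + 1 := by
    intro x y hxy
    have h1 := Finset.card_union_add_card_inter (G.neighborFinset x) (G.neighborFinset y)
    have h2 : (G.neighborFinset x ∪ G.neighborFinset y).card ≤ p + 2 := by
      rw [← hV]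
      exact (Finset.card_le_card (Finset.subset_univ _)).trans_eq (Finset.card_univ)
    have h3 := hbook x y hxy
    unfold SimpleGraph.degree
    omega
  -- a vertex of full degree
  obtain ⟨u, hu⟩ : ∃ u, G.degree u = p + 1 := by
    by_contra h
    push_neg at h
    have : ∑ v, G.degree v ≤ (p + 2) * p := by
      calc ∑ v, G.degree v ≤ ∑ _v : V, p := Finset.sum_le_sum (fun v _ => by
              have := h v; have := hdeg_le v; omega)
        _ = (p + 2) * p := by rw [Finset.sum_const, Finset.card_univ, hV, smul_eq_mul]
    nlinarith [hsum]
  have hadj_u : ∀ v, v ≠ u → G.Adj u v := by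
    intro v hv
    by_contra hadj
    have hsub : G.neighborFinset u ⊆ (Finset.univ.erase u).erase v := by
      intro w hw
      rw [SimpleGraph.mem_neighborFinset] at hw
      refine Finset.mem_erase.mpr ⟨fun h => hadj (h ▸ hw), Finset.mem_erase.mpr
        ⟨fun h => G.loopless.irrefl u (h ▸ hw), Finset.mem_univ w⟩⟩
    have hcard : ((Finset.univ.erase u).erase v).card = p := by
      rw [Finset.card_erase_of_mem (Finset.mem_erase.mpr ⟨hv, Finset.mem_univ v⟩),
        Finset.card_erase_of_mem (Finset.mem_univ u), Finset.card_univ, hV]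
      omega
    have := Finset.card_le_card hsub
    rw [hcard] at this
    unfold SimpleGraph.degree at hu
    omega
  -- all other vertices have degree p
  have hdeg : ∀ v, v ≠ u → G.degree v = p := by
    intro v hv
    have hle : ∀ w, w ≠ u → G.degree w ≤ p := by
      intro w hw
      have := hedge u w (hadj_u w hw)
      omega
    by_contra hne
    have hvlt : G.degree v < p := lt_of_le_of_ne (hle v hv) hne
    have hsplit : ∑ w, G.degree w = G.degree u + ∑ w ∈ Finset.univ.erase u, G.degree w := by
      exact (Finset.add_sum_erase _ _ (Finset.mem_univ u)).symm
    have hbound : ∑ w ∈ Finset.univ.erase u, G.degree w < (p + 1) * p := by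
      have hcard : (Finset.univ.erase u).card = p + 1 := by
        rw [Finset.card_erase_of_mem (Finset.mem_univ u), Finset.card_univ, hV]
        omega
      calc ∑ w ∈ Finset.univ.erase u, G.degree w
          < ∑ _w ∈ Finset.univ.erase u, p := by
            apply Finset.sum_lt_sum (fun w hw => hle w (Finset.mem_erase.mp hw).1)
            exact ⟨v, Finset.mem_erase.mpr ⟨hv, Finset.mem_univ v⟩, hvlt⟩
        _ = (p + 1) * p := by rw [Finset.sum_const, hcard, smul_eq_mul]
    rw [hsplit, hu] at hsum
    nlinarith [hsum]
  -- unique non-neighbor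
  have hex : ∀ v : V, v ≠ u → ∃ a : V, Finset.univ \ insert v (G.neighborFinset v) = {a} := by
    intro v hv
    apply Finset.card_eq_one.mp
    have h1 : (insert v (G.neighborFinset v)).card = p + 1 := by
      rw [Finset.card_insert_of_notMem (by simp [SimpleGraph.mem_neighborFinset])]
      rw [SimpleGraph.card_neighborFinset_eq_degree, hdeg v hv]
    rw [Finset.card_sdiff_of_subset (Finset.subset_univ _), Finset.card_univ, hV, h1]
    omega
  let f0 : V → V := fun v => if h : v ≠ u then (hex v h).choose else v
  have hf0 : ∀ v (hv : v ≠ u) (w : V), (w ≠ v ∧ ¬ G.Adj v w) ↔ w = f0 v := by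
    intro v hv w
    have heq : f0 v = (hex v hv).choose := dif_pos hv
    rw [heq, ← Finset.mem_singleton, ← (hex v hv).choose_spec, Finset.mem_sdiff,
      Finset.mem_insert]
    simp only [Finset.mem_univ, true_and, SimpleGraph.mem_neighborFinset]
    tauto
  have hprop : ∀ v (hv : v ≠ u), f0 v ≠ v ∧ ¬ G.Adj v (f0 v) := fun v hv =>
    (hf0 v hv (f0 v)).mpr rfl
  have hf0_ne_u : ∀ v (hv : v ≠ u), f0 v ≠ u := by
    intro v hv h
    exact (hprop v hv).2 (h ▸ (hadj_u v hv).symm)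
  have hinv : ∀ v (hv : v ≠ u), f0 (f0 v) = v := by
    intro v hv
    have h1 := hprop v hv
    exact ((hf0 (f0 v) (hf0_ne_u v hv) v).mp
      ⟨fun h => h1.1 h.symm, fun h => h1.2 h.symm⟩).symm
  -- the pairing
  have hScard : Fintype.card {x : V // x ≠ u} = 2 * m := by
    have h1 : Fintype.card {x : V // ¬ x = u} = Fintype.card V - Fintype.card {x : V // x = u} :=
      Fintype.card_subtype_compl _
    have h2 : Fintype.card {x : V // x = u} = 1 := Fintype.card_subtype_eq u
    have h3 : Fintype.card {x : V // x ≠ u} = Fintype.card {x : V // ¬ x = u} := rfl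
    omega
  let f : {x : V // x ≠ u} → {x : V // x ≠ u} := fun x => ⟨f0 x.1, hf0_ne_u x.1 x.2⟩
  have hff : ∀ x, f (f x) = x := fun x => Subtype.ext (hinv x.1 x.2)
  have hfxne : ∀ x, f x ≠ x := fun x h => (hprop x.1 x.2).1 (congrArg Subtype.val h)
  obtain ⟨e, he⟩ := pairing hScard f hff hfxne
  let e1 : {x : V // x = u} ≃ Fin 1 :=
    ⟨fun _ => 0, fun _ => ⟨u, rfl⟩, fun x => Subsingleton.elim _ _, fun i => Subsingleton.elim _ _⟩
  let Φ : V ≃ Fin 1 ⊕ (Fin m × Fin 2) :=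
    (Equiv.sumCompl (· = u)).symm.trans (Equiv.sumCongr e1 e)
  have hΦu : Φ u = Sum.inl 0 := by
    rw [Equiv.apply_eq_iff_eq_symm_apply]
    simp [Φ]
    rfl
  have hΦ : ∀ a (ha : a ≠ u), Φ a = Sum.inr (e ⟨a, ha⟩) := by
    intro a ha
    rw [Equiv.apply_eq_iff_eq_symm_apply]
    simp [Φ]
  -- characterize adjacency of G off u
  have hGadj : ∀ a b : V, a ≠ u → b ≠ u → (G.Adj a b ↔ (b ≠ a ∧ b ≠ f0 a)) := by
    intro a b ha hb
    constructor
    · intro h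
      refine ⟨fun hba => G.loopless.irrefl a (hba ▸ h), fun hbf => (hprop a ha).2 (hbf ▸ h)⟩
    · rintro ⟨h1, h2⟩
      by_contra hadj
      exact h2 ((hf0 a ha b).mp ⟨h1, hadj⟩)
  refine ⟨⟨Φ, @fun a b => ?_⟩⟩
  by_cases ha : a = u <;> by_cases hb : b = u
  · subst ha; subst hb
    rw [hΦu]
    simp [SimpleGraph.join]
  · subst ha
    rw [hΦu, hΦ b hb]
    simp only [SimpleGraph.join, SimpleGraph.compl_adj, SimpleGraph.sum_adj]
    exact ⟨fun _ => hadj_u b hb, fun _ => ⟨fun h => Sum.inl_ne_inr h, not_false⟩⟩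
  · subst hb
    rw [hΦu, hΦ a ha]
    simp only [SimpleGraph.join, SimpleGraph.compl_adj, SimpleGraph.sum_adj]
    exact ⟨fun _ => (hadj_u a ha).symm, fun _ => ⟨fun h => Sum.inr_ne_inl h, not_false⟩⟩
  · rw [hΦ a ha, hΦ b hb]
    have hLHS : (SimpleGraph.join (completeGraph (Fin 1)) (unionComplete m 2)ᶜ).Adj
        (Sum.inr (e ⟨a, ha⟩)) (Sum.inr (e ⟨b, hb⟩)) ↔
        (e ⟨a, ha⟩).1 ≠ (e ⟨b, hb⟩).1 := by
      simp only [SimpleGraph.join, SimpleGraph.compl_adj, SimpleGraph.sum_adj, compl_compl,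
        unionComplete, SimpleGraph.fromRel_adj, ne_eq, Sum.inr.injEq]
      constructor
      · rintro ⟨h1, h2⟩
        intro hfst
        exact h2 ⟨h1, Or.inl hfst⟩
      · intro hfst
        refine ⟨fun h => hfst (congrArg Prod.fst h), ?_⟩
        rintro ⟨-, (h | h)⟩
        · exact hfst h
        · exact hfst h.symm
    rw [hLHS, hGadj a b ha hb]
    rw [ne_eq, he ⟨a, ha⟩ ⟨b, hb⟩]
    simp only [Subtype.ext_iff, f]
    push_neg
    tauto
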